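/- With the coupled random r-graph setup below, for any function g : ℕ → ℝ with g(n) → ∞ and g(n) = o(log n), with high probability as n → ∞ every independent set of G(σ) has size less than Z = n(log n)^{−1/r}. -/

import Mathlib

open Finset MeasureTheory Filter

noncomputable section
open scoped Classical

/-- The index set: `r`-element subsets of `[n]`. -/
abbrev RSubsets (n r : ℕ) := {S : Finset (Fin n) // S.card = r}

/-- The coupled model: independent `ξ_S`, uniform on `[0,1]`, one for each `r`-subset `S`
of `[n]`; formally the product of uniform measures on the coordinates. -/
def xiMeasure (n r : ℕ) : Measure (RSubsets n r → ℝ) :=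
  Measure.pi fun _ => volume.restrict (Set.Icc (0 : ℝ) 1)

set_option maxHeartbeats 2000000
open scoped ENNReal

instance : IsProbabilityMeasure ((volume : Measure ℝ).restrict (Set.Icc 0 1)) :=
  ⟨by simp⟩

instance (n r : ℕ) : IsProbabilityMeasure (xiMeasure n r) := by
  unfold xiMeasure; infer_instance

lemma measure_indep (n r : ℕ) (σ : ℝ) (h0 : 0 ≤ σ) (X : Finset (Fin n)) :
    xiMeasure n r {ξ : RSubsets n r → ℝ | ∀ S : RSubsets n r, S.1 ⊆ X → ¬ ξ S ≤ σ}
      = ENNReal.ofReal (1 - σ) ^ (X.card.choose r) := by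
  have hset : {ξ : RSubsets n r → ℝ | ∀ S : RSubsets n r, S.1 ⊆ X → ¬ ξ S ≤ σ}
      = Set.pi Set.univ (fun S : RSubsets n r =>
          if S.1 ⊆ X then Set.Ioi σ else Set.univ) := by
    ext ξ
    simp only [Set.mem_setOf_eq, Set.mem_pi, Set.mem_univ, true_implies]
    constructor
    · intro h S
      by_cases hS : S.1 ⊆ X
      · simp only [if_pos hS, Set.mem_Ioi]
        exact not_le.mp (h S hS)
      · simp [hS]
    · intro h S hS
      have := h S
      simp only [hS, if_true, Set.mem_Ioi] at this
      exact not_le.mpr this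
  rw [xiMeasure, hset, Measure.pi_pi]
  have hfac : ∀ S : RSubsets n r,
      (volume.restrict (Set.Icc (0:ℝ) 1)) (if S.1 ⊆ X then Set.Ioi σ else Set.univ)
        = if S.1 ⊆ X then ENNReal.ofReal (1 - σ) else 1 := by
    intro S
    split_ifs with hS
    · rw [Measure.restrict_apply measurableSet_Ioi]
      have : Set.Ioi σ ∩ Set.Icc (0:ℝ) 1 = Set.Ioc σ 1 := by
        ext x
        simp only [Set.mem_inter_iff, Set.mem_Ioi, Set.mem_Icc, Set.mem_Ioc]
        constructor
        · rintro ⟨h1, _, h3⟩; exact ⟨h1, h3⟩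
        · rintro ⟨h1, h2⟩; exact ⟨h1, le_of_lt (lt_of_le_of_lt h0 h1), h2⟩
      rw [this, Real.volume_Ioc]
    · simp
  simp_rw [hfac]
  rw [Finset.prod_ite, Finset.prod_const, Finset.prod_const, one_pow, mul_one]
  congr 1
  have : (Finset.univ.filter fun S : RSubsets n r => S.1 ⊆ X).card
      = (X.powersetCard r).card := by
    apply Finset.card_bij (fun S _ => S.1)
    · intro S hS
      simp only [Finset.mem_filter, Finset.mem_univ, true_and] at hS
      exact Finset.mem_powersetCard.mpr ⟨hS, S.2⟩
    · intro a ha b hb hab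
      exact Subtype.ext hab
    · intro T hT
      rw [Finset.mem_powersetCard] at hT
      exact ⟨⟨T, hT.2⟩, by simp [hT.1], rfl⟩
  rw [this, Finset.card_powersetCard]

open scoped ENNReal in
lemma compl_bound (n r : ℕ) (σ Z : ℝ) (h0 : 0 ≤ σ) :
    xiMeasure n r {ξ : RSubsets n r → ℝ |
        ∀ X : Finset (Fin n),
          (∀ S : RSubsets n r, ξ S ≤ σ → ¬ S.1 ⊆ X) → (X.card : ℝ) < Z}ᶜ
      ≤ (n.choose ⌈Z⌉₊ : ℝ≥0∞) * ENNReal.ofReal (1 - σ) ^ (Nat.choose ⌈Z⌉₊ r) := by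
  set k := ⌈Z⌉₊ with hk
  have hsub : {ξ : RSubsets n r → ℝ |
        ∀ X : Finset (Fin n),
          (∀ S : RSubsets n r, ξ S ≤ σ → ¬ S.1 ⊆ X) → (X.card : ℝ) < Z}ᶜ
      ⊆ ⋃ Y ∈ Finset.powersetCard k (Finset.univ : Finset (Fin n)),
          {ξ : RSubsets n r → ℝ | ∀ S : RSubsets n r, S.1 ⊆ Y → ¬ ξ S ≤ σ} := by
    intro ξ hξ
    simp only [Set.mem_compl_iff, Set.mem_setOf_eq] at hξ
    push_neg at hξ
    obtain ⟨X, hind, hcard⟩ := hξ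
    have hkX : k ≤ X.card := Nat.ceil_le.mpr hcard
    obtain ⟨Y, hYX, hYcard⟩ := Finset.exists_subset_card_eq hkX
    refine Set.mem_biUnion (Finset.mem_powersetCard.mpr ⟨Finset.subset_univ _, hYcard⟩) ?_
    intro S hSY
    exact fun hle => hind S hle (hSY.trans hYX)
  calc xiMeasure n r _ ≤ xiMeasure n r (⋃ Y ∈ Finset.powersetCard k (Finset.univ : Finset (Fin n)),
          {ξ : RSubsets n r → ℝ | ∀ S : RSubsets n r, S.1 ⊆ Y → ¬ ξ S ≤ σ}) :=
        measure_mono hsub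
    _ ≤ ∑ Y ∈ Finset.powersetCard k (Finset.univ : Finset (Fin n)),
          xiMeasure n r {ξ : RSubsets n r → ℝ | ∀ S : RSubsets n r, S.1 ⊆ Y → ¬ ξ S ≤ σ} :=
        measure_biUnion_finset_le _ _
    _ = ∑ Y ∈ Finset.powersetCard k (Finset.univ : Finset (Fin n)),
          ENNReal.ofReal (1 - σ) ^ (Nat.choose k r) := by
        refine Finset.sum_congr rfl fun Y hY => ?_
        rw [measure_indep n r σ h0 Y, (Finset.mem_powersetCard.mp hY).2]
    _ = (n.choose k : ℝ≥0∞) * ENNReal.ofReal (1 - σ) ^ (Nat.choose k r) := by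
        rw [Finset.sum_const, Finset.card_powersetCard, Finset.card_univ, Fintype.card_fin,
          nsmul_eq_mul]

lemma psi_tendsto_zero (r : ℕ) (hr : 2 ≤ r) :
    Tendsto (fun n : ℕ => (1 + Real.log (Real.log n)) * Real.log n ^ (-(1:ℝ)/r))
      atTop (nhds 0) := by
  have hrpos : (0:ℝ) < 1 / r := by
    have : (0:ℝ) < r := by exact_mod_cast (by omega : 0 < r)
    positivity
  have hf : Tendsto (fun L : ℝ => (1 + Real.log L) * L ^ (-(1:ℝ)/r)) atTop (nhds 0) := by
    have t1 : Tendsto (fun L : ℝ => L ^ (-((1:ℝ)/r))) atTop (nhds 0) :=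
      tendsto_rpow_neg_atTop hrpos
    have t2 : Tendsto (fun L : ℝ => Real.log L * L ^ (-((1:ℝ)/r))) atTop (nhds 0) := by
      have := (isLittleO_log_rpow_atTop hrpos).tendsto_div_nhds_zero
      refine this.congr' ?_
      filter_upwards [eventually_gt_atTop (0:ℝ)] with L hL
      rw [Real.rpow_neg hL.le, div_eq_mul_inv]
    have := t1.add t2
    simp only [add_zero] at this
    refine this.congr ?_
    intro L
    rw [neg_div]
    ring
  have hlog : Tendsto (fun n : ℕ => Real.log n) atTop atTop :=
    Real.tendsto_log_atTop.comp tendsto_natCast_atTop_atTop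
  exact hf.comp hlog

lemma phi_tendsto_atTop (r : ℕ) (hr : 2 ≤ r) :
    Tendsto (fun n : ℕ => (n:ℝ) * Real.log n ^ (-(1:ℝ)/r)) atTop atTop := by
  have hsq : Tendsto (fun n : ℕ => (n:ℝ) ^ ((1:ℝ)/2)) atTop atTop :=
    (tendsto_rpow_atTop (by norm_num)).comp tendsto_natCast_atTop_atTop
  refine tendsto_atTop_mono' _ ?_ hsq
  have h1 : ∀ᶠ n : ℕ in atTop, 1 ≤ Real.log n :=
    (Real.tendsto_log_atTop.comp tendsto_natCast_atTop_atTop).eventually_ge_atTop 1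
  have h2 : ∀ᶠ n : ℕ in atTop, ‖Real.log (n:ℝ)‖ ≤ 1 * ‖(n:ℝ) ^ ((1:ℝ)/2)‖ :=
    tendsto_natCast_atTop_atTop.eventually
      ((isLittleO_log_rpow_atTop (by norm_num : (0:ℝ) < 1/2)).def one_pos)
  have h3 : ∀ᶠ n : ℕ in atTop, (1:ℝ) ≤ n :=
    tendsto_natCast_atTop_atTop.eventually_ge_atTop 1
  filter_upwards [h1, h2, h3] with n hL hle h1n
  have hL0 : (0:ℝ) < Real.log n := lt_of_lt_of_le one_pos hL
  have hn0 : (0:ℝ) < n := lt_of_lt_of_le one_pos h1n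
  have hle' : Real.log n ≤ (n:ℝ) ^ ((1:ℝ)/2) := by
    have := hle
    rw [one_mul, Real.norm_eq_abs, Real.norm_eq_abs, abs_of_pos hL0,
      abs_of_nonneg (Real.rpow_nonneg hn0.le _)] at this
    exact this
  have hLr : Real.log n ^ ((1:ℝ)/r) ≤ (n:ℝ) ^ ((1:ℝ)/2) := by
    calc Real.log n ^ ((1:ℝ)/r) ≤ Real.log n ^ (1:ℝ) := by
          apply Real.rpow_le_rpow_of_exponent_le hL
          rw [div_le_one (by exact_mod_cast (by omega : 0 < r))]
          exact_mod_cast (by omega : 1 ≤ r)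
      _ = Real.log n := Real.rpow_one _
      _ ≤ _ := hle'
  have hpos : (0:ℝ) < Real.log n ^ ((1:ℝ)/r) := Real.rpow_pos_of_pos hL0 _
  have hneg : Real.log n ^ (-(1:ℝ)/r) = (Real.log n ^ ((1:ℝ)/r))⁻¹ := by
    rw [neg_div, Real.rpow_neg hL0.le]
  have key : (n:ℝ) ^ ((1:ℝ)/2) * Real.log n ^ ((1:ℝ)/r) ≤ (n:ℝ) := by
    calc (n:ℝ) ^ ((1:ℝ)/2) * Real.log n ^ ((1:ℝ)/r)
        ≤ (n:ℝ) ^ ((1:ℝ)/2) * (n:ℝ) ^ ((1:ℝ)/2) :=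
          mul_le_mul_of_nonneg_left hLr (Real.rpow_nonneg hn0.le _)
      _ = (n:ℝ) := by
          rw [← Real.rpow_add hn0]
          norm_num
  rw [hneg, ← div_eq_mul_inv, le_div_iff₀ hpos]
  exact key

def kk (r n : ℕ) : ℕ := ⌈(n:ℝ) * Real.log n ^ (-(1:ℝ)/r)⌉₊

def sg (r : ℕ) (g : ℕ → ℝ) (n : ℕ) : ℝ :=
  (Real.log n - g n) / (Nat.choose (n - 1) (r - 1) : ℝ)

def bb (r : ℕ) (g : ℕ → ℝ) (n : ℕ) : ℝ :=
  (Nat.choose n (kk r n) : ℝ) * Real.exp (-(sg r g n) * (Nat.choose (kk r n) r))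

lemma bb_tendsto_zero (r : ℕ) (hr : 2 ≤ r) (g : ℕ → ℝ)
    (hgtop : Tendsto g atTop atTop)
    (hgo : g =o[atTop] fun n : ℕ => Real.log n) :
    Tendsto (bb r g) atTop (nhds 0) := by
  set c : ℝ := ((2:ℝ)^(r+1) * (r.factorial : ℝ))⁻¹ with hc
  have hcpos : 0 < c := by positivity
  have hrR : (0:ℝ) < r := by exact_mod_cast (by omega : 0 < r)
  have hup : ∀ᶠ n : ℕ in atTop, bb r g n ≤ Real.exp (-(c/2) * n) := by
    have ev1 : ∀ᶠ n : ℕ in atTop, 1 ≤ Real.log n :=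
      (Real.tendsto_log_atTop.comp tendsto_natCast_atTop_atTop).eventually_ge_atTop 1
    have ev2 : ∀ᶠ n : ℕ in atTop, 0 ≤ g n := hgtop.eventually_ge_atTop 0
    have ev3 : ∀ᶠ n : ℕ in atTop, ‖g n‖ ≤ (1/2) * ‖Real.log (n:ℕ)‖ := hgo.def (by norm_num)
    have ev4 : ∀ᶠ n : ℕ in atTop, 1 ≤ (n:ℝ) * Real.log n ^ (-(1:ℝ)/r) :=
      (phi_tendsto_atTop r hr).eventually_ge_atTop 1
    have ev5 : ∀ᶠ n : ℕ in atTop, (2*r : ℝ) ≤ (n:ℝ) * Real.log n ^ (-(1:ℝ)/r) :=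
      (phi_tendsto_atTop r hr).eventually_ge_atTop _
    have ev6 : ∀ᶠ n : ℕ in atTop,
        (1 + Real.log (Real.log n)) * Real.log n ^ (-(1:ℝ)/r) < c/4 :=
      (psi_tendsto_zero r hr).eventually (gt_mem_nhds (by positivity))
    have ev7 : ∀ᶠ n : ℕ in atTop, r ≤ n := eventually_ge_atTop r
    have ev8 : ∀ᶠ n : ℕ in atTop, 1 ≤ n := eventually_ge_atTop 1
    filter_upwards [ev1, ev2, ev3, ev4, ev5, ev6, ev7, ev8] with n hL hg0 hgle hZ1 hZ2r hpsi hrn h1n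
    set L := Real.log n with hLdef
    have hL0 : (0:ℝ) < L := lt_of_lt_of_le one_pos hL
    have hn0 : (0:ℝ) < n := by exact_mod_cast (by omega : 0 < n)
    set Z : ℝ := (n:ℝ) * L ^ (-(1:ℝ)/r) with hZdef
    have hZpos : (0:ℝ) < Z := lt_of_lt_of_le one_pos hZ1
    set k : ℕ := kk r n with hkdef
    have hkceil : k = ⌈Z⌉₊ := rfl
    have hkZ : Z ≤ (k:ℝ) := by rw [hkceil]; exact Nat.le_ceil _
    have hk2Z : (k:ℝ) ≤ 2 * Z := by
      rw [hkceil]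
      have := Nat.ceil_lt_add_one hZpos.le
      linarith
    have hk1 : 1 ≤ k := by rw [hkceil]; exact Nat.one_le_ceil_iff.mpr hZpos
    have hkpos : (0:ℝ) < k := by exact_mod_cast (by omega : 0 < k)
    have hk2r : (2*r:ℝ) ≤ (k:ℝ) := le_trans hZ2r hkZ
    -- g bound
    have hgL : g n ≤ L / 2 := by
      rw [Real.norm_eq_abs, Real.norm_eq_abs, abs_of_nonneg hg0, abs_of_pos hL0] at hgle
      linarith
    -- denominator
    set D : ℝ := (Nat.choose (n-1) (r-1) : ℝ) with hDdef
    have hDpos : (0:ℝ) < D := by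
      rw [hDdef]
      exact_mod_cast Nat.choose_pos (by omega : r - 1 ≤ n - 1)
    have hDle : D ≤ (n:ℝ)^(r-1) := by
      rw [hDdef]
      calc ((Nat.choose (n-1) (r-1) : ℕ) : ℝ) ≤ (((n-1)^(r-1) : ℕ) : ℝ) := by
            exact_mod_cast Nat.choose_le_pow (n-1) (r-1)
        _ ≤ (((n)^(r-1) : ℕ) : ℝ) := by
            exact_mod_cast Nat.pow_le_pow_left (by omega : n - 1 ≤ n) (r-1)
        _ = (n:ℝ)^(r-1) := by push_cast; ring
    set σn : ℝ := sg r g n with hσdef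
    have hσeq : σn = (L - g n) / D := rfl
    have hσ0 : 0 ≤ σn := by
      rw [hσeq]
      exact div_nonneg (by linarith) hDpos.le
    have hσlow : L / (2*D) ≤ σn := by
      rw [hσeq]
      rw [div_le_div_iff₀ (by positivity) hDpos]
      nlinarith
    -- choose bounds
    set Cnk : ℝ := (Nat.choose n k : ℝ) with hCnkdef
    set Ckr : ℝ := (Nat.choose k r : ℝ) with hCkrdef
    have hCnk : Cnk ≤ Real.exp ((k:ℝ) * Real.log n + k - k * Real.log k) := by
      have h1 : Cnk ≤ (n:ℝ)^k / (k.factorial : ℝ) := Nat.choose_le_pow_div k n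
      have hfk : (0:ℝ) < (k.factorial : ℝ) := by exact_mod_cast k.factorial_pos
      have hkk : (0:ℝ) < (k:ℝ)^k := by positivity
      have h2 : (k:ℝ)^k / (k.factorial : ℝ) ≤ Real.exp k :=
        Real.pow_div_factorial_le_exp (hx := hkpos.le) (n := k)
      have h2' : (k:ℝ)^k ≤ Real.exp k * (k.factorial : ℝ) := by
        rwa [div_le_iff₀ hfk] at h2
      have h3 : (n:ℝ)^k / (k.factorial : ℝ) ≤ (n:ℝ)^k * Real.exp k / (k:ℝ)^k := by
        rw [div_le_div_iff₀ hfk hkk]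
        calc (n:ℝ)^k * (k:ℝ)^k ≤ (n:ℝ)^k * (Real.exp k * (k.factorial : ℝ)) :=
              mul_le_mul_of_nonneg_left h2' (by positivity)
          _ = (n:ℝ)^k * Real.exp k * (k.factorial : ℝ) := by ring
      have h4 : (n:ℝ)^k * Real.exp k / (k:ℝ)^k
          = Real.exp ((k:ℝ) * Real.log n + k - k * Real.log k) := by
        rw [show (k:ℝ) * Real.log n + (k:ℝ) - (k:ℝ) * Real.log k
            = ((k:ℝ) * Real.log n + (k:ℝ)) - (k:ℝ) * Real.log k by ring,
          Real.exp_sub, Real.exp_add, Real.exp_nat_mul, Real.exp_nat_mul,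
          Real.exp_log hn0, Real.exp_log hkpos]
      exact h1.trans (h3.trans_eq h4)
    -- bb bounded by exponential
    have hbb : bb r g n ≤ Real.exp
        (((k:ℝ) * Real.log n + k - k * Real.log k) - σn * Ckr) := by
      have : bb r g n = Cnk * Real.exp (-σn * Ckr) := rfl
      rw [this]
      calc Cnk * Real.exp (-σn * Ckr)
          ≤ Real.exp ((k:ℝ) * Real.log n + k - k * Real.log k) * Real.exp (-σn * Ckr) :=
            mul_le_mul_of_nonneg_right hCnk (Real.exp_nonneg _)
        _ = Real.exp (((k:ℝ) * Real.log n + k - k * Real.log k) - σn * Ckr) := by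
            rw [← Real.exp_add]; ring_nf
    -- bound on the entropy term
    have hlogL0 : 0 ≤ Real.log L := Real.log_nonneg hL
    have hlogk : Real.log n - Real.log k ≤ Real.log L := by
      have h5 : Real.log Z ≤ Real.log k := Real.log_le_log hZpos hkZ
      have hlogZ : Real.log Z = Real.log n - Real.log L / r := by
        rw [hZdef, Real.log_mul (ne_of_gt hn0) (ne_of_gt (Real.rpow_pos_of_pos hL0 _)),
          Real.log_rpow hL0]
        ring
      have h6 : Real.log L / r ≤ Real.log L :=
        div_le_self hlogL0 (by exact_mod_cast (by omega : 1 ≤ r))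
      rw [hlogZ] at h5
      linarith
    have hA : (k:ℝ) * Real.log n + k - k * Real.log k ≤ 2 * Z * (1 + Real.log L) := by
      nlinarith [mul_le_mul_of_nonneg_left hlogk hkpos.le,
        mul_le_mul_of_nonneg_right hk2Z (by linarith : (0:ℝ) ≤ 1 + Real.log L)]
    have hA2 : 2 * Z * (1 + Real.log L) ≤ (c/2) * n := by
      have hpsi' : (1 + Real.log L) * L ^ (-(1:ℝ)/r) ≤ c/4 := le_of_lt hpsi
      have h2n : (0:ℝ) ≤ 2*(n:ℝ) := by positivity
      rw [hZdef]
      linarith [mul_le_mul_of_nonneg_left hpsi' h2n]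
    -- lower bound on σn * Ckr
    have hLrinv : (L ^ (-(1:ℝ)/r))^r = L⁻¹ := by
      rw [← Real.rpow_natCast (L ^ (-(1:ℝ)/r)) r, ← Real.rpow_mul hL0.le]
      rw [neg_div, neg_mul, div_mul_cancel₀ _ (by exact_mod_cast (by omega : r ≠ 0) : (r:ℝ) ≠ 0)]
      exact Real.rpow_neg_one L
    have hCkr : (n:ℝ)^r * L⁻¹ / (2^r * (r.factorial : ℝ)) ≤ Ckr := by
      have hdesc : (k+1-r)^r ≤ r.factorial * Nat.choose k r := by
        rw [← Nat.descFactorial_eq_factorial_mul_choose]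
        exact Nat.pow_sub_le_descFactorial k r
      have h6 : (((k+1-r:ℕ)):ℝ) = (k:ℝ)+1-r := by
        have hrk : r ≤ k+1 := by
          have : (2*r:ℕ) ≤ k := by exact_mod_cast hk2r
          omega
        push_cast [Nat.cast_sub hrk]
        ring
      have hcast : ((k:ℝ)+1-r)^r ≤ (r.factorial : ℝ) * Ckr := by
        rw [← h6, hCkrdef]
        exact_mod_cast hdesc
      have hZ2k : Z/2 ≤ (k:ℝ)+1-r := by linarith
      have hpow : (Z/2)^r ≤ (r.factorial : ℝ) * Ckr :=
        le_trans (pow_le_pow_left₀ (by positivity) hZ2k r) hcast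
      have hZr : (Z/2)^r = (n:ℝ)^r * L⁻¹ / 2^r := by
        rw [div_pow, hZdef, mul_pow, hLrinv]
      rw [hZr] at hpow
      rw [div_le_iff₀ (by positivity)]
      calc (n:ℝ)^r * L⁻¹ = ((n:ℝ)^r * L⁻¹ / 2^r) * 2^r := by field_simp
        _ ≤ ((r.factorial : ℝ) * Ckr) * 2^r := by
            apply mul_le_mul_of_nonneg_right hpow (by positivity)
        _ = Ckr * (2^r * (r.factorial : ℝ)) := by ring
    have hσC : c * n ≤ σn * Ckr := by
      have hCkr0 : (0:ℝ) ≤ (n:ℝ)^r * L⁻¹ / (2^r * (r.factorial : ℝ)) := by positivity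
      have s1 : L/(2*D) * ((n:ℝ)^r * L⁻¹ / (2^r * (r.factorial : ℝ))) ≤ σn * Ckr :=
        mul_le_mul hσlow hCkr hCkr0 hσ0
      have s2 : L/(2*D) * ((n:ℝ)^r * L⁻¹ / (2^r * (r.factorial : ℝ)))
          = (n:ℝ)^r / (2^(r+1) * (r.factorial : ℝ) * D) := by
        field_simp
        ring
      have hpowpos : (0:ℝ) < (n:ℝ)^(r-1) := by positivity
      have s3 : (n:ℝ)^r / (2^(r+1) * (r.factorial : ℝ) * (n:ℝ)^(r-1))
          ≤ (n:ℝ)^r / (2^(r+1) * (r.factorial : ℝ) * D) := by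
        apply div_le_div_of_nonneg_left (by positivity) (by positivity)
        exact mul_le_mul_of_nonneg_left hDle (by positivity)
      have s4 : (n:ℝ)^r / (2^(r+1) * (r.factorial : ℝ) * (n:ℝ)^(r-1)) = c * n := by
        have hpow : (n:ℝ)^r = (n:ℝ)^(r-1) * n := by
          conv_lhs => rw [show r = (r-1)+1 by omega]
          rw [pow_succ]
        rw [hpow, hc]
        field_simp
      rw [s2] at s1
      calc c * n = (n:ℝ)^r / (2^(r+1) * (r.factorial : ℝ) * (n:ℝ)^(r-1)) := s4.symm
        _ ≤ (n:ℝ)^r / (2^(r+1) * (r.factorial : ℝ) * D) := s3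
        _ ≤ σn * Ckr := s1
    -- combine
    refine hbb.trans (Real.exp_le_exp.mpr ?_)
    linarith
  have hlow : ∀ᶠ n : ℕ in atTop, 0 ≤ bb r g n :=
    Eventually.of_forall fun n => by
      unfold bb; positivity
  have hexp : Tendsto (fun n : ℕ => Real.exp (-(c/2) * n)) atTop (nhds 0) :=
    Real.tendsto_exp_atBot.comp
      (Tendsto.const_mul_atTop_of_neg (by linarith) tendsto_natCast_atTop_atTop)
  exact tendsto_of_tendsto_of_tendsto_of_le_of_le' tendsto_const_nhds hexp hlow hup


/-- For `g → ∞` with `g = o(log n)`, w.h.p. every independent set of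
`G(σ)` (whose edges are the `S` with `ξ_S ≤ σ`) has size less than `Z = n (log n)^{-1/r}`,
where `σ = (log n − g(n))/C(n−1,r−1)`. -/
theorem stmt14 (r : ℕ) (hr : 2 ≤ r) (g : ℕ → ℝ)
    (hgtop : Tendsto g atTop atTop)
    (hgo : g =o[atTop] fun n : ℕ => Real.log n) :
    Tendsto (fun n : ℕ =>
        xiMeasure n r {ξ : RSubsets n r → ℝ |
          ∀ X : Finset (Fin n),
            (∀ S : RSubsets n r,
              ξ S ≤ (Real.log n - g n) / (Nat.choose (n - 1) (r - 1) : ℝ) → ¬ S.1 ⊆ X) →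
            (X.card : ℝ) < n * Real.log n ^ (-(1 : ℝ) / r)})
      atTop (nhds 1) := by
  have key : Tendsto (fun n : ℕ =>
      xiMeasure n r {ξ : RSubsets n r → ℝ |
          ∀ X : Finset (Fin n),
            (∀ S : RSubsets n r,
              ξ S ≤ (Real.log n - g n) / (Nat.choose (n - 1) (r - 1) : ℝ) → ¬ S.1 ⊆ X) →
            (X.card : ℝ) < n * Real.log n ^ (-(1 : ℝ) / r)}ᶜ) atTop (nhds 0) := by
    have ev1 : ∀ᶠ n : ℕ in atTop, 1 ≤ Real.log n :=
      (Real.tendsto_log_atTop.comp tendsto_natCast_atTop_atTop).eventually_ge_atTop 1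
    have ev3 : ∀ᶠ n : ℕ in atTop, ‖g n‖ ≤ (1/2) * ‖Real.log (n:ℕ)‖ := hgo.def (by norm_num)
    have hbnd : ∀ᶠ n : ℕ in atTop,
        xiMeasure n r {ξ : RSubsets n r → ℝ |
          ∀ X : Finset (Fin n),
            (∀ S : RSubsets n r,
              ξ S ≤ (Real.log n - g n) / (Nat.choose (n - 1) (r - 1) : ℝ) → ¬ S.1 ⊆ X) →
            (X.card : ℝ) < n * Real.log n ^ (-(1 : ℝ) / r)}ᶜ
          ≤ ENNReal.ofReal (bb r g n) := by
      filter_upwards [ev1, ev3] with n hL hgle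
      have hgL : g n ≤ Real.log n / 2 := by
        rw [Real.norm_eq_abs, Real.norm_eq_abs, abs_of_pos (lt_of_lt_of_le one_pos hL)] at hgle
        calc g n ≤ |g n| := le_abs_self _
          _ ≤ _ := hgle
        linarith
      have h0 : 0 ≤ (Real.log n - g n) / (Nat.choose (n - 1) (r - 1) : ℝ) :=
        div_nonneg (by linarith) (Nat.cast_nonneg _)
      have h1 := compl_bound n r ((Real.log n - g n) / (Nat.choose (n - 1) (r - 1) : ℝ))
        ((n:ℝ) * Real.log n ^ (-(1 : ℝ) / r)) h0
      refine le_trans h1 ?_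
      set σn := (Real.log n - g n) / (Nat.choose (n - 1) (r - 1) : ℝ) with hσdef
      set k := ⌈(n:ℝ) * Real.log n ^ (-(1 : ℝ) / r)⌉₊ with hkdef
      have hbbeq : ENNReal.ofReal (bb r g n)
          = (Nat.choose n k : ℝ≥0∞) *
            ENNReal.ofReal (Real.exp (-σn * (Nat.choose k r : ℕ))) := by
        rw [show bb r g n = (Nat.choose n k : ℝ) *
            Real.exp (-σn * (Nat.choose k r : ℕ)) from rfl,
          ENNReal.ofReal_mul (Nat.cast_nonneg _), ENNReal.ofReal_natCast]
      rw [hbbeq]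
      refine mul_le_mul_right ?_ _
      calc ENNReal.ofReal (1 - σn) ^ (Nat.choose k r)
          ≤ ENNReal.ofReal (Real.exp (-σn)) ^ (Nat.choose k r) := by
            apply pow_le_pow_left' (ENNReal.ofReal_le_ofReal ?_)
            linarith [Real.add_one_le_exp (-σn)]
        _ = ENNReal.ofReal (Real.exp (-σn) ^ (Nat.choose k r)) :=
            (ENNReal.ofReal_pow (Real.exp_nonneg _) _).symm
        _ = ENNReal.ofReal (Real.exp (-σn * (Nat.choose k r : ℕ))) := by
            rw [← Real.exp_nat_mul]
            ring_nf
    have hofReal : Tendsto (fun n : ℕ => ENNReal.ofReal (bb r g n)) atTop (nhds 0) := by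
      have := ENNReal.tendsto_ofReal (bb_tendsto_zero r hr g hgtop hgo)
      simpa using this
    exact tendsto_of_tendsto_of_tendsto_of_le_of_le' tendsto_const_nhds hofReal
      (Eventually.of_forall fun _ => zero_le) hbnd
  have hge : ∀ n : ℕ, 1 - xiMeasure n r {ξ : RSubsets n r → ℝ |
          ∀ X : Finset (Fin n),
            (∀ S : RSubsets n r,
              ξ S ≤ (Real.log n - g n) / (Nat.choose (n - 1) (r - 1) : ℝ) → ¬ S.1 ⊆ X) →
            (X.card : ℝ) < n * Real.log n ^ (-(1 : ℝ) / r)}ᶜ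
        ≤ xiMeasure n r {ξ : RSubsets n r → ℝ |
          ∀ X : Finset (Fin n),
            (∀ S : RSubsets n r,
              ξ S ≤ (Real.log n - g n) / (Nat.choose (n - 1) (r - 1) : ℝ) → ¬ S.1 ⊆ X) →
            (X.card : ℝ) < n * Real.log n ^ (-(1 : ℝ) / r)} := by
    intro n
    set E := {ξ : RSubsets n r → ℝ |
          ∀ X : Finset (Fin n),
            (∀ S : RSubsets n r,
              ξ S ≤ (Real.log n - g n) / (Nat.choose (n - 1) (r - 1) : ℝ) → ¬ S.1 ⊆ X) →
            (X.card : ℝ) < n * Real.log n ^ (-(1 : ℝ) / r)} with hE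
    have h := measure_union_le (μ := xiMeasure n r) E Eᶜ
    rw [Set.union_compl_self, measure_univ] at h
    exact tsub_le_iff_right.mpr h
  have hlow : Tendsto (fun n : ℕ => 1 - xiMeasure n r {ξ : RSubsets n r → ℝ |
          ∀ X : Finset (Fin n),
            (∀ S : RSubsets n r,
              ξ S ≤ (Real.log n - g n) / (Nat.choose (n - 1) (r - 1) : ℝ) → ¬ S.1 ⊆ X) →
            (X.card : ℝ) < n * Real.log n ^ (-(1 : ℝ) / r)}ᶜ) atTop (nhds 1) := by
    have hcont : Tendsto (fun x : ℝ≥0∞ => 1 - x) (nhds 0) (nhds 1) := by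
      simpa using (ENNReal.continuous_sub_left (a := 1) ENNReal.one_ne_top).tendsto 0
    exact hcont.comp key
  exact tendsto_of_tendsto_of_tendsto_of_le_of_le hlow tendsto_const_nhds hge
    (fun n => prob_le_one)
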